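/- Let P ⊆ R be an ideal and let c ≥ 1 be an integer. Then for every point ξ ∈ W with ξ_1 = 0 and Eord_ξ(P) ≥ c, the coefficient ideal of P along E with respect to the hypersurface V = {x_1 = 0} satisfies Eord_{ξ'}(C(P,c)) ≥ c!. -/

import Mathlib

open MvPolynomial

noncomputable section

/-- The variable index type: `x`-variables indexed by `Fin s`, `y`-variables by `Fin r`. -/
abbrev BV (s r : ℕ) : Type := Fin s ⊕ Fin r

/-- The polynomial ring `R = K[x_1,…,x_s,y_1,…,y_r]`. -/
abbrev BR (K : Type) [Field K] (s r : ℕ) : Type := MvPolynomial (BV s r) K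

variable (K : Type) [Field K] (s r : ℕ)

/-- `W`: the set of points all of whose `y`-coordinates are nonzero. -/
def Wset : Set (BV s r → K) := {ξ | ∀ j : Fin r, ξ (Sum.inr j) ≠ 0}

/-- `I_ξ`: the ideal generated by the variables vanishing at `ξ`. -/
def Ivan (ξ : BV s r → K) : Ideal (BR K s r) :=
  Ideal.span {p : BR K s r | ∃ i : BV s r, ξ i = 0 ∧ p = X i}

/-- `m_ξ`: the maximal ideal of polynomials vanishing at `ξ`. -/
def mAt (ξ : BV s r → K) : Ideal (BR K s r) := RingHom.ker (eval ξ)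

instance mAt_isMaximal (ξ : BV s r → K) : (mAt K s r ξ).IsMaximal :=
  RingHom.ker_isMaximal_of_surjective _ (fun a => ⟨C a, eval_C a⟩)

/-- `O_ξ`: the localization of `R` at `m_ξ`. -/
abbrev Oloc (ξ : BV s r → K) : Type := Localization.AtPrime (mAt K s r ξ)

/-- The `E`-order of an ideal `J` at a point `ξ`:
`sup { m : J·O_ξ ⊆ (I_ξ·O_ξ)^m }`. -/
def Eord (ξ : BV s r → K) (J : Ideal (BR K s r)) : ℕ∞ :=
  sSup ((fun m : ℕ => (m : ℕ∞)) ''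
    {m : ℕ | J.map (algebraMap (BR K s r) (Oloc K s r ξ)) ≤
      ((Ivan K s r ξ).map (algebraMap (BR K s r) (Oloc K s r ξ))) ^ m})

/-- The order of an ideal `J` at a point `ξ`:
`sup { m : J·O_ξ ⊆ (m_ξ·O_ξ)^m }`. -/
def ordAt (ξ : BV s r → K) (J : Ideal (BR K s r)) : ℕ∞ :=
  sSup ((fun m : ℕ => (m : ℕ∞)) ''
    {m : ℕ | J.map (algebraMap (BR K s r) (Oloc K s r ξ)) ≤
      ((mAt K s r ξ).map (algebraMap (BR K s r) (Oloc K s r ξ))) ^ m})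

/-- `x^α`. -/
def xPow (α : Fin s → ℕ) : BR K s r := ∏ i, X (Sum.inl i) ^ α i

/-- `y^γ` for `γ ∈ ℕ^r`. -/
def yPow (γ : Fin r → ℕ) : BR K s r := ∏ j, X (Sum.inr j) ^ γ j

/-- positive part `γ₊` of `γ ∈ ℤ^r`. -/
def ipos (γ : Fin r → ℤ) : Fin r → ℕ := fun j => (γ j).toNat

/-- negative part `γ₋` of `γ ∈ ℤ^r`. -/
def ineg (γ : Fin r → ℤ) : Fin r → ℕ := fun j => (-(γ j)).toNat

/-- a non-hyperbolic binomial `y^{γ₊}x^α − b·y^{γ₋}x^β`. -/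
def nhb (γ : Fin r → ℤ) (α β : Fin s → ℕ) (b : K) : BR K s r :=
  yPow K s r (ipos r γ) * xPow K s r α - C b * yPow K s r (ineg r γ) * xPow K s r β

/-- a hyperbolic equation `y^{δ₋} − μ·y^{δ₊}`. -/
def hyp (δ : Fin r → ℤ) (μ : K) : BR K s r :=
  yPow K s r (ineg r δ) - C μ * yPow K s r (ipos r δ)

/-- a generator of a binomial ideal:
`x^λ(y^{δ₋} − μ y^{δ₊})` or `x^ν(y^{γ₊}x^α − b y^{γ₋}x^β)` with `α,β` of disjoint supports. -/
def IsBinomGen (g : BR K s r) : Prop :=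
  (∃ (lam : Fin s → ℕ) (δ : Fin r → ℤ) (μ : K),
      g = xPow K s r lam * hyp K s r δ μ) ∨
  (∃ (ν α β : Fin s → ℕ) (γ : Fin r → ℤ) (b : K),
      (∀ i, α i = 0 ∨ β i = 0) ∧ g = xPow K s r ν * nhb K s r γ α β b)

/-- a binomial ideal: an ideal generated by finitely many binomial generators. -/
def IsBinomialIdeal (J : Ideal (BR K s r)) : Prop :=
  ∃ S : Finset (BR K s r), (∀ g ∈ S, IsBinomGen K s r g) ∧ J = Ideal.span (S : Set (BR K s r))

open Classical in
/-- `|ν|_ξ = Σ_{i : ξ_i = 0} ν_i` (sum over vanishing x-coordinates). -/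
def nsumAt (ξ : BV s r → K) (ν : Fin s → ℕ) : ℕ :=
  ∑ i, if ξ (Sum.inl i) = 0 then ν i else 0


/-- `Option A ⊕ B ≃ Option (A ⊕ B)`. -/
def optSum (A B : Type) : Option A ⊕ B ≃ Option (A ⊕ B) :=
  ((Equiv.optionEquivSumPUnit A).sumCongr (Equiv.refl B)).trans <|
    (Equiv.sumAssoc A PUnit.{1} B).trans <|
      ((Equiv.refl A).sumCongr (Equiv.sumComm PUnit.{1} B)).trans <|
        (Equiv.sumAssoc A B PUnit.{1}).symm.trans
          (Equiv.optionEquivSumPUnit (A ⊕ B)).symm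

/-- The variables of `K[x_1,…,x_{s+1},y]` split as the variable `x_1` (the `none` case)
and the variables of `K[x_2,…,x_{s+1},y]`. -/
def varEquiv : BV (s + 1) r ≃ Option (BV s r) :=
  ((finSuccEquiv s).sumCongr (Equiv.refl (Fin r))).trans (optSum (Fin s) (Fin r))

/-- Identification of `R = K[x_1,…,x_{s+1},y]` with `R'[x_1]`, `R' = K[x_2,…,x_{s+1},y]`. -/
def toPoly : BR K (s + 1) r ≃ₐ[K] Polynomial (BR K s r) :=
  (renameEquiv K (varEquiv s r)).trans (optionEquivLeft K (BV s r))

/-- `a_{f,k}`: the coefficient of `x_1^k` in `f` under the identification `R = R'[x_1]`. -/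
def coeffAt (f : BR K (s + 1) r) (k : ℕ) : BR K s r :=
  (toPoly K s r f).coeff k

/-- The coefficient ideal `C(P,c)` of `P` along `E` with respect to `V = {x_1 = 0}`,
with factorial normalization: it is generated by the `a_{f,k}^{c!/(c-k)}`, `f ∈ P`, `k < c`. -/
def coeffIdeal (P : Ideal (BR K (s + 1) r)) (c : ℕ) : Ideal (BR K s r) :=
  Ideal.span {g : BR K s r |
    ∃ f ∈ P, ∃ k < c, g = coeffAt K s r f k ^ (Nat.factorial c / (c - k))}

/-- `ξ'`: the point `ξ` with its first (`x_1`) coordinate removed. -/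
def resPt (ξ : BV (s + 1) r → K) : BV s r → K :=
  fun v => match v with
  | Sum.inl i => ξ (Sum.inl i.succ)
  | Sum.inr j => ξ (Sum.inr j)

open Classical in
/-- The chart morphism `σ_j` of the blow-up along `Z = ∩_{i ∈ I} {x_i = 0}`:
`x_i ↦ x_i·x_j` for `i ∈ I ∖ {j}`, all other variables are fixed. -/
def chart (I : Finset (Fin s)) (j : Fin s) : BR K s r →ₐ[K] BR K s r :=
  aeval (fun v : BV s r => match v with
    | Sum.inl i => if i ∈ I ∧ i ≠ j then X (Sum.inl i) * X (Sum.inl j) else X (Sum.inl i)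
    | Sum.inr k => X (Sum.inr k))

end

noncomputable section AuxProof

open Polynomial in
/-- The ideal of `R'[X]` of polynomials whose `k`-th coefficient lies in `J^(m-k)`. -/
def Qid (K : Type) [Field K] (s r : ℕ) (J : Ideal (BR K s r)) (m : ℕ) :
    Ideal (Polynomial (BR K s r)) where
  carrier := {p | ∀ k, p.coeff k ∈ J ^ (m - k)}
  add_mem' := by
    intro a b ha hb k
    rw [Polynomial.coeff_add]
    exact Ideal.add_mem _ (ha k) (hb k)
  zero_mem' := by intro k; simp
  smul_mem' := by
    intro q p hp k
    rw [smul_eq_mul, Polynomial.coeff_mul]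
    refine Ideal.sum_mem _ ?_
    rintro ⟨i, j⟩ hij
    have hj : j ≤ k := by
      have := Finset.HasAntidiagonal.mem_antidiagonal.mp hij
      omega
    exact Ideal.mul_mem_left _ _
      (Ideal.pow_le_pow_right (by omega) (hp j))

variable (K : Type) [Field K] (s r : ℕ)

lemma Qid_mem {J : Ideal (BR K s r)} {m : ℕ} {p : Polynomial (BR K s r)} :
    p ∈ Qid K s r J m ↔ ∀ k, p.coeff k ∈ J ^ (m - k) := Iff.rfl

lemma Qid_mul_le (J : Ideal (BR K s r)) (a b : ℕ) :
    Qid K s r J a * Qid K s r J b ≤ Qid K s r J (a + b) := by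
  refine Ideal.mul_le.mpr ?_
  intro p hp q hq k
  rw [Polynomial.coeff_mul]
  refine Ideal.sum_mem _ ?_
  rintro ⟨i, j⟩ hij
  have hij' : i + j = k := Finset.HasAntidiagonal.mem_antidiagonal.mp hij
  have h1 : p.coeff i * q.coeff j ∈ J ^ ((a - i) + (b - j)) := by
    rw [pow_add]
    exact Ideal.mul_mem_mul (hp i) (hq j)
  exact Ideal.pow_le_pow_right (by omega) h1

lemma Qid_pow_le (J : Ideal (BR K s r)) (c : ℕ) :
    (Qid K s r J 1) ^ c ≤ Qid K s r J c := by
  induction c with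
  | zero =>
      intro p _ k
      simp
  | succ n ih =>
      calc (Qid K s r J 1) ^ (n + 1) = (Qid K s r J 1) ^ n * Qid K s r J 1 := pow_succ (Qid K s r J 1) n
        _ ≤ Qid K s r J n * Qid K s r J 1 := Ideal.mul_mono_left ih
        _ ≤ Qid K s r J (n + 1) := Qid_mul_le K s r J n 1

lemma mem_Qid_one {J : Ideal (BR K s r)} {p : Polynomial (BR K s r)}
    (h : p.coeff 0 ∈ J) : p ∈ Qid K s r J 1 := by
  intro k
  cases k with
  | zero => simpa using h
  | succ n => simp

end AuxProof
noncomputable section AuxProof2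

variable (K : Type) [Field K] (s r : ℕ)

lemma toPoly_X_zero : toPoly K s r (X (Sum.inl 0)) = Polynomial.X := by
  simp [toPoly, varEquiv, optSum, optionEquivLeft_X_none]

lemma toPoly_X_succ (i : Fin s) :
    toPoly K s r (X (Sum.inl i.succ)) = Polynomial.C (X (Sum.inl i)) := by
  simp [toPoly, varEquiv, optSum, optionEquivLeft_X_some]

lemma toPoly_X_inr (j : Fin r) :
    toPoly K s r (X (Sum.inr j)) = Polynomial.C (X (Sum.inr j)) := by
  simp [toPoly, varEquiv, optSum, optionEquivLeft_X_some]

lemma toPoly_C (a : K) : toPoly K s r (C a) = Polynomial.C (C a) := by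
  simp [toPoly, optionEquivLeft_C]

/-- Key structural lemma: coefficients of elements of `I_ξ^c`. -/
lemma coeffAt_mem_pow (ξ : BV (s + 1) r → K) (c : ℕ)
    {g : BR K (s + 1) r} (hg : g ∈ (Ivan K (s + 1) r ξ) ^ c) (k : ℕ) :
    coeffAt K s r g k ∈ (Ivan K s r (resPt K s r ξ)) ^ (c - k) := by
  set J := Ivan K s r (resPt K s r ξ) with hJ
  have hmap : (Ivan K (s + 1) r ξ).map (toPoly K s r : BR K (s+1) r →+* _)
      ≤ Qid K s r J 1 := by
    rw [Ivan, Ideal.map_span]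
    refine Ideal.span_le.mpr ?_
    rintro _ ⟨p, ⟨v, hv, rfl⟩, rfl⟩
    refine mem_Qid_one K s r ?_
    rcases v with i | j
    · rcases Fin.eq_zero_or_eq_succ i with h0 | ⟨i', rfl⟩
      · subst h0
        rw [RingHom.coe_coe, toPoly_X_zero]
        simp
      · rw [RingHom.coe_coe, toPoly_X_succ]
        rw [Polynomial.coeff_C_zero]
        exact Ideal.subset_span ⟨Sum.inl i', hv, rfl⟩
    · rw [RingHom.coe_coe, toPoly_X_inr]
      rw [Polynomial.coeff_C_zero]
      exact Ideal.subset_span ⟨Sum.inr j, hv, rfl⟩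
  have hg2 : toPoly K s r g ∈ Qid K s r J c := by
    have h1 : toPoly K s r g ∈
        ((Ivan K (s+1) r ξ) ^ c).map (toPoly K s r : BR K (s+1) r →+* _) :=
      Ideal.mem_map_of_mem _ hg
    rw [Ideal.map_pow] at h1
    exact Qid_pow_le K s r J c (Ideal.pow_right_mono hmap c h1)
  exact hg2 k

end AuxProof2
noncomputable section AuxProof3

variable (K : Type) [Field K] (s r : ℕ)

lemma coeffAt_mul (w f : BR K (s + 1) r) (k : ℕ) :
    coeffAt K s r (w * f) k =
      ∑ p ∈ Finset.HasAntidiagonal.antidiagonal k, coeffAt K s r w p.1 * coeffAt K s r f p.2 := by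
  simp only [coeffAt, map_mul, Polynomial.coeff_mul]

lemma eval_eq_eval_coeffAt_zero (ξ : BV (s + 1) r → K) (hξ1 : ξ (Sum.inl 0) = 0)
    (w : BR K (s + 1) r) :
    eval ξ w = eval (resPt K s r ξ) (coeffAt K s r w 0) := by
  have key : (eval ξ : BR K (s+1) r →+* K) =
      (Polynomial.eval₂RingHom (eval (resPt K s r ξ) : BR K s r →+* K) 0).comp
        (toPoly K s r : BR K (s+1) r →+* Polynomial (BR K s r)) := by
    apply MvPolynomial.ringHom_ext
    · intro a
      simp [toPoly_C]
    · intro v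
      rcases v with i | j
      · rcases Fin.eq_zero_or_eq_succ i with h0 | ⟨i', rfl⟩
        · subst h0
          simp [toPoly_X_zero, hξ1]
        · simp only [RingHom.comp_apply, RingHom.coe_coe, toPoly_X_succ,
            Polynomial.coe_eval₂RingHom, Polynomial.eval₂_C, eval_X]
          rfl
      · simp only [RingHom.comp_apply, RingHom.coe_coe, toPoly_X_inr,
          Polynomial.coe_eval₂RingHom, Polynomial.eval₂_C, eval_X]
        rfl
  have := congrArg (fun φ : BR K (s+1) r →+* K => φ w) key
  simpa [coeffAt, Polynomial.eval₂_at_zero] using this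

end AuxProof3
noncomputable section AuxProof4

variable (K : Type) [Field K] (s r : ℕ)

/-- Key induction: `w₀^(k+1)·a_{f,k} ∈ J^(c-k)` when `w·f ∈ I_ξ^c`. -/
lemma key_induction (ξ : BV (s + 1) r → K) (c : ℕ)
    (f w : BR K (s + 1) r) (hwf : w * f ∈ (Ivan K (s + 1) r ξ) ^ c) (k : ℕ) :
    (coeffAt K s r w 0) ^ (k + 1) * coeffAt K s r f k ∈
      (Ivan K s r (resPt K s r ξ)) ^ (c - k) := by
  induction k using Nat.strong_induction_on with
  | _ k ih =>
    set J := Ivan K s r (resPt K s r ξ)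
    set w0 := coeffAt K s r w 0 with hw0
    have hwfk : coeffAt K s r (w * f) k ∈ J ^ (c - k) :=
      coeffAt_mem_pow K s r ξ c hwf k
    have hsplit : coeffAt K s r (w * f) k
        = w0 * coeffAt K s r f k
          + ∑ p ∈ (Finset.HasAntidiagonal.antidiagonal k).erase (0, k),
              coeffAt K s r w p.1 * coeffAt K s r f p.2 := by
      rw [coeffAt_mul]
      rw [← Finset.add_sum_erase _ (fun p : ℕ × ℕ => coeffAt K s r w p.1 * coeffAt K s r f p.2)
        (show ((0:ℕ), k) ∈ Finset.HasAntidiagonal.antidiagonal k from Finset.HasAntidiagonal.mem_antidiagonal.mpr (zero_add k))]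
    have heq : w0 ^ (k + 1) * coeffAt K s r f k
        = w0 ^ k * coeffAt K s r (w * f) k
          - ∑ p ∈ (Finset.HasAntidiagonal.antidiagonal k).erase (0, k),
              w0 ^ k * (coeffAt K s r w p.1 * coeffAt K s r f p.2) := by
      rw [hsplit, ← Finset.mul_sum]
      ring
    rw [heq]
    refine Ideal.sub_mem _ (Ideal.mul_mem_left _ _ hwfk) (Ideal.sum_mem _ ?_)
    rintro ⟨i, j⟩ hp
    have hp1 := Finset.HasAntidiagonal.mem_antidiagonal.mp (Finset.mem_of_mem_erase hp)
    have hne := Finset.ne_of_mem_erase hp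
    have hj : j < k := by
      rcases Nat.lt_or_ge j k with h | h
      · exact h
      · exfalso; apply hne
        have : j = k := by omega
        subst this
        have : i = 0 := by omega
        simp [this]
    have hterm : w0 ^ (j + 1) * coeffAt K s r f j ∈ J ^ (c - j) := ih j hj
    have hpow : w0 ^ k = w0 ^ (k - (j + 1)) * w0 ^ (j + 1) := by
      rw [← pow_add]; congr 1; omega
    have heq2 : w0 ^ k * (coeffAt K s r w i * coeffAt K s r f j)
        = (coeffAt K s r w i * w0 ^ (k - (j + 1))) *
            (w0 ^ (j + 1) * coeffAt K s r f j) := by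
      rw [hpow]; ring
    rw [heq2]
    exact Ideal.mul_mem_left _ _ (Ideal.pow_le_pow_right (by omega) hterm)

end AuxProof4
noncomputable section AuxProof5

variable (K : Type) [Field K] (s r : ℕ)

lemma map_le_of_le_Eord (ξ : BV s r → K) (J : Ideal (BR K s r)) (c : ℕ)
    (h : (c : ℕ∞) ≤ Eord K s r ξ J) :
    J.map (algebraMap (BR K s r) (Oloc K s r ξ)) ≤
      ((Ivan K s r ξ).map (algebraMap (BR K s r) (Oloc K s r ξ))) ^ c := by
  have hex : ∃ m : ℕ, (J.map (algebraMap (BR K s r) (Oloc K s r ξ)) ≤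
      ((Ivan K s r ξ).map (algebraMap (BR K s r) (Oloc K s r ξ))) ^ m) ∧ c ≤ m := by
    by_contra hcon
    push_neg at hcon
    have hc0 : 0 < c := hcon 0 (by simp)
    have hb : Eord K s r ξ J ≤ ((c - 1 : ℕ) : ℕ∞) := by
      refine sSup_le ?_
      rintro x ⟨m, hm, rfl⟩
      have hmc : m < c := hcon m hm
      simpa using (Nat.cast_le.mpr (by omega : m ≤ c - 1) : (m:ℕ∞) ≤ ((c-1:ℕ):ℕ∞))
    have h2 : (c : ℕ∞) ≤ ((c - 1 : ℕ) : ℕ∞) := le_trans h hb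
    have h3 : c ≤ c - 1 := by exact_mod_cast h2
    omega
  obtain ⟨m, hm, hcm⟩ := hex
  exact le_trans hm (Ideal.pow_le_pow_right hcm)

end AuxProof5

/-- for an ideal `P ⊆ R` and an integer `c ≥ 1`, at every `ξ ∈ W` with
`ξ_1 = 0` and `Eord_ξ(P) ≥ c`, the coefficient ideal of `P` along `E` with respect to
`V = {x_1 = 0}` satisfies `Eord_{ξ'}(C(P,c)) ≥ c!`. -/
theorem Eord_coeffIdeal_ge
    (K : Type) [Field K] [IsAlgClosed K] (s r : ℕ)
    (P : Ideal (BR K (s + 1) r)) (c : ℕ) (hc : 1 ≤ c)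
    (ξ : BV (s + 1) r → K) (hξ : ξ ∈ Wset K (s + 1) r)
    (hξ1 : ξ (Sum.inl 0) = 0)
    (hP : (c : ℕ∞) ≤ Eord K (s + 1) r ξ P) :
    (Nat.factorial c : ℕ∞) ≤ Eord K s r (resPt K s r ξ) (coeffIdeal K s r P c) := by
  set ξ' := resPt K s r ξ with hξ'
  refine le_sSup ⟨c.factorial, ?_, rfl⟩
  show (coeffIdeal K s r P c).map (algebraMap (BR K s r) (Oloc K s r ξ')) ≤
    ((Ivan K s r ξ').map (algebraMap (BR K s r) (Oloc K s r ξ'))) ^ c.factorial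
  have hPmap := map_le_of_le_Eord K (s+1) r ξ P c hP
  rw [coeffIdeal, Ideal.map_span]
  refine Ideal.span_le.mpr ?_
  rintro _ ⟨g, ⟨f, hf, k, hk, rfl⟩, rfl⟩
  -- extract a denominator
  have h1 : algebraMap (BR K (s+1) r) (Oloc K (s+1) r ξ) f ∈
      ((Ivan K (s+1) r ξ) ^ c).map (algebraMap (BR K (s+1) r) (Oloc K (s+1) r ξ)) := by
    rw [Ideal.map_pow]
    exact hPmap (Ideal.mem_map_of_mem _ hf)
  obtain ⟨⟨a, u⟩, hu⟩ := (IsLocalization.mem_map_algebraMap_iff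
    (mAt K (s+1) r ξ).primeCompl (Oloc K (s+1) r ξ)).mp h1
  have hinj : Function.Injective (algebraMap (BR K (s+1) r) (Oloc K (s+1) r ξ)) := by
    apply IsLocalization.injective (M := (mAt K (s+1) r ξ).primeCompl)
    intro x hx
    exact mem_nonZeroDivisors_of_ne_zero
      (fun h0 => hx (h0 ▸ Ideal.zero_mem (mAt K (s+1) r ξ)))
  have hfu : (u : BR K (s+1) r) * f ∈ (Ivan K (s+1) r ξ) ^ c := by
    have heq : algebraMap (BR K (s+1) r) (Oloc K (s+1) r ξ) ((u : BR K (s+1) r) * f)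
        = algebraMap (BR K (s+1) r) (Oloc K (s+1) r ξ) (a : BR K (s+1) r) := by
      rw [map_mul, mul_comm]; exact hu
    rw [hinj heq]
    exact a.2
  have hu_ne : eval ξ (u : BR K (s+1) r) ≠ 0 := fun h0 => u.2 h0
  set w0 := coeffAt K s r (u : BR K (s+1) r) 0 with hw0def
  have hw0 : eval ξ' w0 ≠ 0 := by
    rw [hw0def, ← eval_eq_eval_coeffAt_zero K s r ξ hξ1]
    exact hu_ne
  have hkey : w0 ^ (k + 1) * coeffAt K s r f k ∈ (Ivan K s r ξ') ^ (c - k) :=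
    key_induction K s r ξ c f (u : BR K (s+1) r) hfu k
  set N := c.factorial / (c - k) with hNdef
  have hNfac : (c - k) * N = c.factorial :=
    Nat.mul_div_cancel' (Nat.dvd_factorial (by omega) (by omega))
  have hmem : (w0 ^ (k + 1)) ^ N * (coeffAt K s r f k) ^ N ∈
      (Ivan K s r ξ') ^ c.factorial := by
    rw [← mul_pow, ← hNfac, pow_mul]
    exact Ideal.pow_mem_pow hkey N
  have hunit : IsUnit (algebraMap (BR K s r) (Oloc K s r ξ') ((w0 ^ (k + 1)) ^ N)) := by
    refine IsLocalization.map_units (M := (mAt K s r ξ').primeCompl) _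
      ⟨(w0 ^ (k + 1)) ^ N, ?_⟩
    intro hker
    have : eval ξ' ((w0 ^ (k + 1)) ^ N) = 0 := hker
    rw [map_pow, map_pow] at this
    exact pow_ne_zero _ (pow_ne_zero _ hw0) this
  show algebraMap (BR K s r) (Oloc K s r ξ') ((coeffAt K s r f k) ^ N) ∈
    ((Ivan K s r ξ').map (algebraMap (BR K s r) (Oloc K s r ξ'))) ^ c.factorial
  rw [← Ideal.map_pow, ← Ideal.unit_mul_mem_iff_mem _ hunit, ← map_mul]
  exact Ideal.mem_map_of_mem _ hmem
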